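/- Let F_q have characteristic 3 and let a ∈ F_q with a ≠ 0. Then for all b ∈ F_q and 0 ≤ i ≤ q, the number of c ∈ F_q for which x³ - a x² - b x - c = 0 has exactly i solutions in F_q equals the number of c' ∈ F_q for which x³ - x² - c' = 0 has exactly i solutions in F_q. -/

import Mathlib

open Finset
open scoped Classical

theorem stmt7 {F : Type*} [Field F] [Fintype F] [CharP F 3]
    (a : F) (ha : a ≠ 0) (b : F) (i : ℕ) :
    (Finset.univ.filter (fun c : F =>
      (Finset.univ.filter (fun x : F => x ^ 3 - a * x ^ 2 - b * x - c = 0)).card = i)).card =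
    (Finset.univ.filter (fun c' : F =>
      (Finset.univ.filter (fun x : F => x ^ 3 - x ^ 2 - c' = 0)).card = i)).card := by
  have h3 : (3 : F) = 0 := by exact_mod_cast CharP.cast_eq_zero F 3
  set B : F := b / a ^ 2 with hB
  have hb : b = a ^ 2 * B := by
    rw [hB, mul_div_assoc', eq_div_iff (pow_ne_zero 2 ha), mul_comm]
  -- key polynomial identity
  have key : ∀ z c : F, (a * (z + B)) ^ 3 - a * (a * (z + B)) ^ 2 - b * (a * (z + B)) - c
      = a ^ 3 * (z ^ 3 - z ^ 2 - (c / a ^ 3 - B ^ 3 - B ^ 2)) := by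
    intro z c
    have hc : a ^ 3 * (c / a ^ 3) = c := by field_simp
    rw [hb]
    linear_combination (a ^ 3 * (B * z ^ 2 + (B ^ 2 - B) * z - B ^ 2)) * h3 + hc
  -- inner count equality
  have inner : ∀ c : F,
      (Finset.univ.filter (fun x : F => x ^ 3 - a * x ^ 2 - b * x - c = 0)).card =
      (Finset.univ.filter (fun z : F => z ^ 3 - z ^ 2 - (c / a ^ 3 - B ^ 3 - B ^ 2) = 0)).card := by
    intro c
    apply Finset.card_nbij' (fun x => x / a - B) (fun z => a * (z + B))
    · intro x hx
      simp only [Finset.mem_coe, mem_filter, mem_univ, true_and] at hx ⊢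
      have hxz : a * (x / a - B + B) = x := by field_simp; ring
      have := key (x / a - B) c
      rw [hxz] at this
      rw [hx] at this
      rcases mul_eq_zero.mp this.symm with h | h
      · exact absurd h (pow_ne_zero 3 ha)
      · exact h
    · intro z hz
      simp only [Finset.mem_coe, mem_filter, mem_univ, true_and] at hz ⊢
      rw [key z c, hz, mul_zero]
    · intro x _
      field_simp; ring
    · intro z _
      field_simp
      ring
  -- outer bijection
  apply Finset.card_nbij' (fun c => c / a ^ 3 - B ^ 3 - B ^ 2)
    (fun c' => a ^ 3 * (c' + B ^ 3 + B ^ 2))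
  · intro c hc
    simp only [Finset.mem_coe, mem_filter, mem_univ, true_and] at hc ⊢
    rw [← inner c]; exact hc
  · intro c' hc'
    simp only [Finset.mem_coe, mem_filter, mem_univ, true_and] at hc' ⊢
    rw [inner (a ^ 3 * (c' + B ^ 3 + B ^ 2))]
    have : a ^ 3 * (c' + B ^ 3 + B ^ 2) / a ^ 3 - B ^ 3 - B ^ 2 = c' := by field_simp; ring
    rw [this]; exact hc'
  · intro c _; field_simp; ring
  · intro c' _; field_simp; ring
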